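/- If F ⊆ {0,1,*}^d is a k-neighborly family of maximum size (with k ≤ d), then every string in F has at most d - k joker (*) symbols. -/

import Mathlib

open Finset

/-- Number of coordinates where one string has 0 and the other 1. -/
def Dd {d : ℕ} (x y : Fin d → Option Bool) : ℕ :=
  (univ.filter fun i => ∃ b : Bool, x i = some b ∧ y i = some !b).card

/-- The subcube of binary strings agreeing with `x` on all non-joker coordinates. -/
def Hcube {d : ℕ} (x : Fin d → Option Bool) : Finset (Fin d → Bool) :=
  univ.filter fun u => ∀ i : Fin d, ∀ b : Bool, x i = some b → u i = b

/-- Number of joker (`*`) coordinates of `x`. -/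
def jok {d : ℕ} (x : Fin d → Option Bool) : ℕ :=
  (univ.filter fun i => x i = none).card

/-- `k`-neighborly family of strings in `{0,1,*}^d`. -/
def Nbly {d : ℕ} (k : ℕ) (F : Finset (Fin d → Option Bool)) : Prop :=
  ∀ x ∈ F, ∀ y ∈ F, x ≠ y → 1 ≤ Dd x y ∧ Dd x y ≤ k

/-- `n(k,d)`: maximum size of a `k`-neighborly family in `{0,1,*}^d`. -/
noncomputable def nbox (k d : ℕ) : ℕ :=
  sSup {n | ∃ F : Finset (Fin d → Option Bool), Nbly k F ∧ F.card = n}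

lemma Dd_symm {d : ℕ} (x y : Fin d → Option Bool) : Dd x y = Dd y x := by
  unfold Dd
  congr 1
  apply filter_congr
  intro i _
  constructor
  · rintro ⟨b, h1, h2⟩; exact ⟨!b, h2, by simpa using h1⟩
  · rintro ⟨b, h1, h2⟩; exact ⟨!b, h2, by simpa using h1⟩

lemma Dd_update_ge {d : ℕ} (x y : Fin d → Option Bool) (i : Fin d) (hxi : x i = none) (b : Bool) :
    Dd x y ≤ Dd (Function.update x i (some b)) y := by
  apply card_le_card
  intro j hj
  simp only [mem_filter, mem_univ, true_and] at hj ⊢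
  obtain ⟨c, h1, h2⟩ := hj
  have hji : j ≠ i := by rintro rfl; rw [hxi] at h1; simp at h1
  exact ⟨c, by rw [Function.update_apply, if_neg hji]; exact h1, h2⟩

lemma Dd_update_le {d : ℕ} (x y : Fin d → Option Bool) (i : Fin d) (b : Bool) :
    Dd (Function.update x i (some b)) y ≤ Dd x y + 1 := by
  unfold Dd
  have hsub : (univ.filter fun j => ∃ c : Bool, Function.update x i (some b) j = some c ∧ y j = some !c)
      ⊆ insert i (univ.filter fun j => ∃ c : Bool, x j = some c ∧ y j = some !c) := by
    intro j hj
    simp only [mem_filter, mem_univ, true_and] at hj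
    obtain ⟨c, h1, h2⟩ := hj
    by_cases hji : j = i
    · simp [hji]
    · rw [Function.update_apply, if_neg hji] at h1
      exact mem_insert_of_mem (by simp only [mem_filter, mem_univ, true_and]; exact ⟨c, h1, h2⟩)
  calc (univ.filter fun j => ∃ c : Bool, Function.update x i (some b) j = some c ∧ y j = some !c).card
      ≤ (insert i (univ.filter fun j => ∃ c : Bool, x j = some c ∧ y j = some !c)).card :=
        card_le_card hsub
    _ ≤ _ + 1 := card_insert_le _ _

lemma Dd_self_update {d : ℕ} (x : Fin d → Option Bool) (i : Fin d) (hxi : x i = none) (b : Bool) :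
    Dd x (Function.update x i (some b)) = 0 := by
  unfold Dd
  rw [card_eq_zero, filter_eq_empty_iff]
  intro j _
  rintro ⟨c, h1, h2⟩
  by_cases hji : j = i
  · subst hji; rw [hxi] at h1; simp at h1
  · rw [Function.update_apply, if_neg hji, h1] at h2
    simp at h2

lemma Dd_two_updates {d : ℕ} (x : Fin d → Option Bool) (i : Fin d) :
    Dd (Function.update x i (some false)) (Function.update x i (some true)) = 1 := by
  unfold Dd
  have h : (univ.filter fun j => ∃ c : Bool, Function.update x i (some false) j = some c ∧
      Function.update x i (some true) j = some !c) = {i} := by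
    ext j
    simp only [mem_filter, mem_univ, true_and, mem_singleton]
    constructor
    · rintro ⟨c, h1, h2⟩
      by_contra hji
      rw [Function.update_apply, if_neg hji] at h1 h2
      rw [h1] at h2; simp at h2
    · rintro rfl
      exact ⟨false, by simp, by simp⟩
  rw [h, card_singleton]

lemma Dd_le_sub {d : ℕ} (x y : Fin d → Option Bool) : Dd x y ≤ d - jok x := by
  have h1 : Dd x y ≤ (univ.filter fun i => ¬ x i = none).card := by
    apply card_le_card
    intro j hj
    simp only [mem_filter, mem_univ, true_and] at hj ⊢
    obtain ⟨c, h1, _⟩ := hj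
    simp [h1]
  have h2 : (univ.filter fun i => x i = none).card +
      (univ.filter fun i => ¬ x i = none).card = d := by
    rw [card_filter_add_card_filter_not]
    simp
  unfold jok
  omega

lemma jok_le {d : ℕ} (x : Fin d → Option Bool) : jok x ≤ d := by
  unfold jok
  calc _ ≤ (univ : Finset (Fin d)).card := card_filter_le _ _
    _ = d := by simp

theorem stmt_14 {k d : ℕ} (hk : 1 ≤ k) (hkd : k ≤ d)
    (F : Finset (Fin d → Option Bool)) (hF : Nbly k F)
    (hmax : ∀ G : Finset (Fin d → Option Bool), Nbly k G → G.card ≤ F.card) :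
    ∀ x ∈ F, jok x ≤ d - k := by
  intro x hx
  by_contra hcon
  push_neg at hcon
  have hjd := jok_le x
  -- find a joker coordinate
  have hpos : 0 < jok x := by omega
  obtain ⟨i, hi⟩ := card_pos.mp hpos
  simp only [jok, mem_filter, mem_univ, true_and] at hi
  set x0 := Function.update x i (some false) with hx0
  set x1 := Function.update x i (some true) with hx1
  have hx0i : x0 i = some false := by simp [hx0]
  have hx1i : x1 i = some true := by simp [hx1]
  -- updates are not in F (other than possibly equal to x, which they aren't)
  have hne : ∀ b : Bool, Function.update x i (some b) ≠ x := by
    intro b h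
    have := congrFun h i
    rw [Function.update_self, hi] at this
    simp at this
  have hnotmem : ∀ b : Bool, Function.update x i (some b) ∉ F := by
    intro b hb
    have h1 := (hF x hx _ hb (Ne.symm (hne b))).1
    rw [Dd_self_update x i hi b] at h1
    omega
  -- the new strings satisfy the neighborliness bounds against F \ {x}
  have hnew : ∀ b : Bool, ∀ y ∈ F, y ≠ x →
      1 ≤ Dd (Function.update x i (some b)) y ∧ Dd (Function.update x i (some b)) y ≤ k := by
    intro b y hy hyx
    obtain ⟨h1, h2⟩ := hF x hx y hy (Ne.symm hyx)
    constructor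
    · exact le_trans h1 (Dd_update_ge x y i hi b)
    · have h3 := Dd_update_le x y i b
      have h4 := Dd_le_sub x y
      omega
  set G := insert x0 (insert x1 (F.erase x)) with hG
  have hx01 : x0 ≠ x1 := by
    intro h
    rw [h] at hx0i
    rw [hx0i] at hx1i
    simp at hx1i
  have hmemG : ∀ a, a ∈ G → a = x0 ∨ a = x1 ∨ (a ∈ F ∧ a ≠ x) := by
    intro a ha
    simp only [hG, mem_insert, mem_erase] at ha
    rcases ha with h | h | ⟨h1, h2⟩
    · exact Or.inl h
    · exact Or.inr (Or.inl h)
    · exact Or.inr (Or.inr ⟨h2, h1⟩)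
  have hNG : Nbly k G := by
    intro a ha b hb hab
    rcases hmemG a ha with rfl | rfl | ⟨haF, hax⟩ <;>
      rcases hmemG b hb with rfl | rfl | ⟨hbF, hbx⟩
    · exact absurd rfl hab
    · rw [hx0, hx1, Dd_two_updates]; exact ⟨le_refl 1, hk⟩
    · exact hnew false b hbF hbx
    · rw [Dd_symm, hx0, hx1, Dd_two_updates]; exact ⟨le_refl 1, hk⟩
    · exact absurd rfl hab
    · exact hnew true b hbF hbx
    · rw [Dd_symm]; exact hnew false a haF hax
    · rw [Dd_symm]; exact hnew true a haF hax
    · exact hF a haF b hbF hab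
  have hcard : G.card = F.card + 1 := by
    have h0 : x0 ∉ insert x1 (F.erase x) := by
      simp only [mem_insert, mem_erase]
      rintro (h | ⟨_, h⟩)
      · exact hx01 h
      · exact hnotmem false h
    have h1 : x1 ∉ F.erase x := by
      simp only [mem_erase]
      rintro ⟨_, h⟩
      exact hnotmem true h
    rw [hG, card_insert_of_notMem h0, card_insert_of_notMem h1, card_erase_of_mem hx]
    have : 1 ≤ F.card := card_pos.mpr ⟨x, hx⟩
    omega
  have := hmax G hNG
  omega
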